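/- Let n ≥ 3 and let π be a non-identity permutation of {1,…,n}. Let ∧²P be the ℤ-linear endomorphism of the second exterior power ⋀²(ℤ^n) (a free ℤ-module of rank C(n,2) with basis {e_i∧e_j : i < j}) determined by ∧²P(e_i∧e_j) = e_{π(i)}∧e_{π(j)}. Then the ℤ-submodule Fix(∧²P) = {w ∈ ⋀²(ℤ^n) : ∧²P(w) = w} has rank strictly less than (n−1)(n−2)/2 + 1. -/

import Mathlib

/-- The `ℤ`-linear endomorphism of `ℤ^n` sending the basis vector `e i` to `e (π i)`. -/
noncomputable def permLinearMap (n : ℕ) (π : Equiv.Perm (Fin n)) :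
    (Fin n → ℤ) →ₗ[ℤ] (Fin n → ℤ) :=
  LinearMap.funLeft ℤ ℤ ⇑π⁻¹

open ExteriorAlgebra

namespace ExtAux

variable (n : ℕ)

/-- projections product multilinear map -/
def proj2 (a b : Fin n) : MultilinearMap ℤ (fun _ : Fin 2 => (Fin n → ℤ)) ℤ :=
  (MultilinearMap.mkPiAlgebra ℤ (Fin 2) ℤ).compLinearMap ![LinearMap.proj a, LinearMap.proj b]

lemma proj2_apply (a b : Fin n) (v : Fin 2 → (Fin n → ℤ)) :
    proj2 n a b v = v 0 a * v 1 b := by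
  simp [proj2, Fin.prod_univ_two]

def coordAlt (a b : Fin n) : (Fin n → ℤ) [⋀^Fin 2]→ₗ[ℤ] ℤ :=
  { toMultilinearMap := proj2 n a b - proj2 n b a
    map_eq_zero_of_eq' := by
      intro v i j hvij hij
      have h01 : v 0 = v 1 := by
        fin_cases i <;> fin_cases j <;> simp_all
      simp [proj2_apply, h01, mul_comm]
  }

lemma coordAlt_apply (a b : Fin n) (v : Fin 2 → (Fin n → ℤ)) :
    coordAlt n a b v = v 0 a * v 1 b - v 0 b * v 1 a := by
  show (proj2 n a b - proj2 n b a) v = _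
  simp [proj2_apply]

noncomputable def coord (a b : Fin n) : ExteriorAlgebra ℤ (Fin n → ℤ) →ₗ[ℤ] ℤ :=
  liftAlternating (Function.update (fun i => (0 : (Fin n → ℤ) [⋀^Fin i]→ₗ[ℤ] ℤ)) 2
    (coordAlt n a b))

lemma coord_ιMulti (a b : Fin n) (v : Fin 2 → (Fin n → ℤ)) :
    coord n a b (ιMulti ℤ 2 v) = v 0 a * v 1 b - v 0 b * v 1 a := by
  rw [coord, liftAlternating_apply_ιMulti, Function.update_self, coordAlt_apply]

end ExtAux
namespace ExtAux
variable (n : ℕ)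

def E (a : Fin n) : Fin n → ℤ := Pi.single a 1

lemma eq_sum_E (x : Fin n → ℤ) : x = ∑ a, x a • E n a := by
  funext j
  simp [E, Pi.single_apply, Finset.sum_ite_eq']

lemma ιMulti_two (v : Fin 2 → (Fin n → ℤ)) :
    ιMulti ℤ 2 v = ι ℤ (v 0) * ι ℤ (v 1) := by
  rw [ιMulti_apply]
  simp [List.ofFn_succ]

end ExtAux

namespace ExtAux
variable (n : ℕ)

def P : Finset (Fin n × Fin n) := Finset.univ.filter (fun p => p.1 < p.2)

lemma expand (v : Fin 2 → (Fin n → ℤ)) :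
    ι ℤ (v 0) * ι ℤ (v 1) =
      ∑ p ∈ P n, (v 0 p.1 * v 1 p.2 - v 0 p.2 * v 1 p.1) •
        (ι ℤ (E n p.1) * ι ℤ (E n p.2)) := by
  set g : Fin n × Fin n → ExteriorAlgebra ℤ (Fin n → ℤ) :=
    fun p => (v 0 p.1 * v 1 p.2) • (ι ℤ (E n p.1) * ι ℤ (E n p.2)) with hg
  have step1 : ι ℤ (v 0) * ι ℤ (v 1) = ∑ p : Fin n × Fin n, g p := by
    conv_lhs => rw [eq_sum_E n (v 0), eq_sum_E n (v 1)]
    rw [map_sum, map_sum]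
    simp only [map_smul]
    rw [Finset.sum_mul_sum, ← Finset.univ_product_univ, Finset.sum_product]
    simp only [smul_mul_assoc, mul_smul_comm, smul_smul, hg, mul_comm]
  rw [step1, ← Finset.sum_filter_add_sum_filter_not Finset.univ (fun p => p.1 < p.2) g]
  rw [← Finset.sum_filter_add_sum_filter_not
    (Finset.univ.filter (fun p : Fin n × Fin n => ¬ p.1 < p.2)) (fun p => p.2 < p.1) g]
  have hdiag : ∑ p ∈ ((Finset.univ.filter (fun p : Fin n × Fin n => ¬ p.1 < p.2)).filter
      (fun p => ¬ p.2 < p.1)), g p = 0 := by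
    apply Finset.sum_eq_zero
    intro p hp
    simp only [Finset.mem_filter] at hp
    have : p.1 = p.2 := le_antisymm (not_lt.1 hp.2) (not_lt.1 hp.1.2)
    simp [g, ← this, ι_sq_zero]
  have hswap : ∑ p ∈ ((Finset.univ.filter (fun p : Fin n × Fin n => ¬ p.1 < p.2)).filter
      (fun p => p.2 < p.1)), g p =
      ∑ p ∈ P n, (v 0 p.2 * v 1 p.1) • (-(ι ℤ (E n p.1) * ι ℤ (E n p.2))) := by
    apply Finset.sum_nbij' (fun p => Prod.swap p) (fun p => Prod.swap p)
    · intro a ha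
      simp only [Finset.mem_filter, P, Finset.mem_univ, true_and] at ha ⊢
      exact ha.2
    · intro a ha
      simp only [Finset.mem_filter, P, Finset.mem_univ, true_and] at ha ⊢
      exact ⟨not_lt.2 ha.le, ha⟩
    · intro a _; simp
    · intro a _; simp
    · intro p hp
      simp only [Finset.mem_filter] at hp
      have hmul : ι ℤ (E n p.1) * ι ℤ (E n p.2) = -(ι ℤ (E n p.2) * ι ℤ (E n p.1)) :=
        eq_neg_of_add_eq_zero_left (ι_add_mul_swap _ _)
      simp [g, hmul]
  rw [hdiag, add_zero, hswap]
  have hP : Finset.filter (fun x : Fin n × Fin n => x.1 < x.2) Finset.univ = P n := rfl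
  rw [hP, ← Finset.sum_add_distrib]
  apply Finset.sum_congr rfl
  intro p hp
  rw [hg]
  simp only [smul_neg, sub_smul]
  ring_nf
  abel

end ExtAux

namespace ExtAux
variable (n : ℕ)

lemma exterior_le_eqLocus {T T' : ExteriorAlgebra ℤ (Fin n → ℤ) →ₗ[ℤ] ℤ}
    (h : ∀ v : Fin 2 → (Fin n → ℤ), T (ιMulti ℤ 2 v) = T' (ιMulti ℤ 2 v)) :
    ⋀[ℤ]^2 (Fin n → ℤ) ≤ LinearMap.eqLocus T T' := by
  rw [← ιMulti_span_fixedDegree, Submodule.span_le]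
  rintro _ ⟨v, rfl⟩
  exact h v

lemma reconstruct {w : ExteriorAlgebra ℤ (Fin n → ℤ)} (hw : w ∈ ⋀[ℤ]^2 (Fin n → ℤ)) :
    w = ∑ p ∈ P n, coord n p.1 p.2 w • (ι ℤ (E n p.1) * ι ℤ (E n p.2)) := by
  set T : ExteriorAlgebra ℤ (Fin n → ℤ) →ₗ[ℤ] ExteriorAlgebra ℤ (Fin n → ℤ) :=
    ∑ p ∈ P n, LinearMap.smulRight (coord n p.1 p.2) (ι ℤ (E n p.1) * ι ℤ (E n p.2)) with hT
  have hle : ⋀[ℤ]^2 (Fin n → ℤ) ≤ LinearMap.eqLocus T LinearMap.id := by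
    rw [← ιMulti_span_fixedDegree, Submodule.span_le]
    rintro _ ⟨v, rfl⟩
    show T (ιMulti ℤ 2 v) = LinearMap.id (ιMulti ℤ 2 v)
    rw [hT, LinearMap.id_apply, LinearMap.sum_apply]
    simp only [LinearMap.smulRight_apply, coord_ιMulti]
    rw [ιMulti_two, expand]
  have := hle hw
  rw [LinearMap.mem_eqLocus] at this
  conv_lhs => rw [← LinearMap.id_apply (R := ℤ) w, ← this]
  rw [hT, LinearMap.sum_apply]
  simp only [LinearMap.smulRight_apply]

lemma coord_antisymm (a b : Fin n) {w : ExteriorAlgebra ℤ (Fin n → ℤ)}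
    (hw : w ∈ ⋀[ℤ]^2 (Fin n → ℤ)) : coord n a b w = - coord n b a w := by
  have hle := exterior_le_eqLocus n (T := coord n a b) (T' := -(coord n b a)) ?_
  · have := hle hw
    rw [LinearMap.mem_eqLocus] at this
    simpa using this
  · intro v
    simp only [coord_ιMulti, LinearMap.neg_apply]
    ring

lemma coord_map (π : Equiv.Perm (Fin n)) (a b : Fin n) {w : ExteriorAlgebra ℤ (Fin n → ℤ)}
    (hw : w ∈ ⋀[ℤ]^2 (Fin n → ℤ)) :
    coord n a b ((ExteriorAlgebra.map (permLinearMap n π)).toLinearMap w)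
      = coord n (π⁻¹ a) (π⁻¹ b) w := by
  have hle := exterior_le_eqLocus n
    (T := (coord n a b).comp (ExteriorAlgebra.map (permLinearMap n π)).toLinearMap)
    (T' := coord n (π⁻¹ a) (π⁻¹ b)) ?_
  · have := hle hw
    rw [LinearMap.mem_eqLocus] at this
    simpa using this
  · intro v
    simp only [LinearMap.comp_apply, AlgHom.toLinearMap_apply, map_apply_ιMulti,
      coord_ιMulti, Function.comp_apply]
    simp [permLinearMap, LinearMap.funLeft_apply]

end ExtAux

theorem rank_fix_extSquare_lt (n : ℕ) (hn : 3 ≤ n)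
    (π : Equiv.Perm (Fin n)) (hπ : π ≠ 1) :
    Module.rank ℤ
        ↥(LinearMap.eqLocus (ExteriorAlgebra.map (permLinearMap n π)).toLinearMap
            LinearMap.id ⊓ ⋀[ℤ]^2 (Fin n → ℤ))
      < (((n - 1) * (n - 2) / 2 + 1 : ℕ) : Cardinal) := by
  classical
  obtain ⟨i0, hi0⟩ : ∃ i, π i ≠ i := by
    by_contra h
    push_neg at h
    exact hπ (Equiv.ext fun x => h x)
  set Fix := LinearMap.eqLocus (ExteriorAlgebra.map (permLinearMap n π)).toLinearMap
      LinearMap.id ⊓ ⋀[ℤ]^2 (Fin n → ℤ) with hFix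
  let κ := {p : Fin n × Fin n // p.1 < p.2 ∧ p.1 ≠ i0 ∧ p.2 ≠ i0}
  let Ψ : ExteriorAlgebra ℤ (Fin n → ℤ) →ₗ[ℤ] (κ → ℤ) :=
    LinearMap.pi (fun p => ExtAux.coord n p.1.1 p.1.2)
  have hinj : Function.Injective (Ψ.comp Fix.subtype) := by
    rw [← LinearMap.ker_eq_bot, LinearMap.ker_eq_bot']
    rintro ⟨w, hwmem⟩ hz0
    obtain ⟨hw1, hw2⟩ := Submodule.mem_inf.1 hwmem
    rw [LinearMap.mem_eqLocus, LinearMap.id_apply] at hw1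
    have hz : ∀ p : κ, ExtAux.coord n p.1.1 p.1.2 w = 0 := by
      intro p
      have := congrFun hz0 p
      simpa [Ψ] using this
    set c : Fin n → Fin n → ℤ := fun a b => ExtAux.coord n a b w with hc
    have hanti : ∀ a b, c a b = - c b a := fun a b => ExtAux.coord_antisymm n a b hw2
    have hdiagz : ∀ a, c a a = 0 := by
      intro a; have := hanti a a; omega
    have h0 : ∀ a b, a ≠ i0 → b ≠ i0 → c a b = 0 := by
      intro a b ha hb
      rcases lt_trichotomy a b with h | h | h
      · exact hz ⟨(a, b), h, ha, hb⟩
      · rw [h]; exact hdiagz b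
      · rw [hanti, show c b a = 0 from hz ⟨(b, a), h, hb, ha⟩, neg_zero]
    have hfixc : ∀ a b, c a b = c (π⁻¹ a) (π⁻¹ b) := by
      intro a b
      have := ExtAux.coord_map n π a b hw2
      rw [hw1] at this
      exact this
    have hπinv : π⁻¹ i0 ≠ i0 := by
      intro h
      exact hi0 (by conv_lhs => rw [← h]; rw [Equiv.Perm.inv_def, Equiv.apply_symm_apply])
    have hI : ∀ b, b ≠ π i0 → c i0 b = 0 := by
      intro b hb
      rw [hfixc]
      refine h0 _ _ hπinv fun h => hb ?_
      rw [← h, Equiv.Perm.inv_def, Equiv.apply_symm_apply]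
    have hk : c i0 (π i0) = 0 := by
      have h1 : c i0 (π i0) = c (π⁻¹ i0) i0 := by
        rw [hfixc]; simp
      by_cases hcase : π⁻¹ i0 = π i0
      · have := h1.trans (hanti _ _)
        rw [hcase] at this
        omega
      · rw [h1, hanti, hI _ hcase, neg_zero]
    have hall : ∀ a b, c a b = 0 := by
      intro a b
      by_cases ha : a = i0
      · subst ha
        by_cases hb : b = π a
        · rw [hb]; exact hk
        · exact hI b hb
      · by_cases hb : b = i0
        · subst hb
          rw [hanti]
          by_cases hak : a = π b
          · rw [hak, hk, neg_zero]
          · rw [hI a hak, neg_zero]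
        · exact h0 a b ha hb
    apply Subtype.ext
    show w = 0
    rw [ExtAux.reconstruct n hw2]
    exact Finset.sum_eq_zero fun p _ => by rw [show ExtAux.coord n p.1 p.2 w = 0 from hall p.1 p.2, zero_smul]
  have hrank := LinearMap.rank_le_of_injective _ hinj
  rw [rank_fun'] at hrank
  have hcount : Fintype.card κ ≤ (n - 1) * (n - 2) / 2 := by
    set m := n - 1 with hm
    let α := {x : Fin n // x ≠ i0}
    have hα : Fintype.card α = m := by
      have : Fintype.card α = Fintype.card (Fin n) - Fintype.card {x : Fin n // x = i0} :=
        Fintype.card_subtype_compl _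
      rw [this, Fintype.card_subtype_eq, Fintype.card_fin]
    let e := monoEquivOfFin α hα
    let f : κ → Σ b : Fin m, Fin b.1 := fun p =>
      ⟨e.symm ⟨p.1.2, p.2.2.2⟩,
        ⟨(e.symm ⟨p.1.1, p.2.2.1⟩ : Fin m).val, by
          have : (⟨p.1.1, p.2.2.1⟩ : α) < ⟨p.1.2, p.2.2.2⟩ := Subtype.mk_lt_mk.2 p.2.1
          exact e.symm.strictMono this⟩⟩
    have hfinj : Function.Injective f := by
      rintro ⟨⟨a1, b1⟩, h1⟩ ⟨⟨a2, b2⟩, h2⟩ hf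
      obtain ⟨hfst, hsnd⟩ := Sigma.ext_iff.1 hf
      have hbv : b1 = b2 :=
        congrArg Subtype.val (e.symm.injective hfst)
      subst hbv
      have hsnd' := eq_of_heq hsnd
      have hval := congrArg Fin.val hsnd'
      simp only [f] at hval
      have ha : (⟨a1, h1.2.1⟩ : α) = ⟨a2, h2.2.1⟩ := e.symm.injective (Fin.ext hval)
      have hav : a1 = a2 := congrArg Subtype.val ha
      exact Subtype.ext (by simp [hav])
    calc Fintype.card κ ≤ Fintype.card (Σ b : Fin m, Fin b.1) :=
          Fintype.card_le_of_injective f hfinj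
      _ = ∑ b : Fin m, b.1 := by simp [Fintype.card_sigma]
      _ = ∑ i ∈ Finset.range m, i := Fin.sum_univ_eq_sum_range (fun i => i) m
      _ = m * (m - 1) / 2 := Finset.sum_range_id m
      _ = (n - 1) * (n - 2) / 2 := by
          have h2 : m - 1 = n - 2 := by omega
          rw [h2]
  calc Module.rank ℤ ↥Fix ≤ (Fintype.card κ : Cardinal) := hrank
    _ ≤ (((n - 1) * (n - 2) / 2 : ℕ) : Cardinal) := by exact_mod_cast hcount
    _ < (((n - 1) * (n - 2) / 2 + 1 : ℕ) : Cardinal) := by exact_mod_cast Nat.lt_succ_self _
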